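/- Let H be a Hilbert space, a a closed positive quadratic form with form domain H¹ (dense in H), and H¹₀ a closed subspace of H¹ (in the form inner product) which is dense in H. Let A_N and A_D be the self-adjoint operators generated by a on H¹ and by the restriction of a to H¹₀ respectively. Then for all u in H¹ and v in H¹₀, a[A_D⁻¹u, v] = (u,v) = a[A_N⁻¹u, v], and consequently A_D⁻¹ = Π₀ A_N⁻¹, where Π₀ denotes the orthogonal projection of H¹ (with inner product a[·,·]) onto H¹₀. -/

import Mathlib

/- Setting: `H` is a complex Hilbert space, `H1` is the form domain of a closed
positive form `a`, viewed as a Hilbert space in its own right with inner product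
`a[·,·]`, continuously and densely embedded in `H` via `J`.  `H0` is a closed
subspace of `H1` which is dense in `H`.  `TN = A_N⁻¹` and `TD = A_D⁻¹` are the
inverses of the self-adjoint operators generated by the form on `H1` and on `H0`,
characterized by `a[A_N⁻¹ u, v] = (u, v)` for all `v ∈ H1` and
`a[A_D⁻¹ u, v] = (u, v)` for all `v ∈ H0`, `A_D⁻¹ u ∈ H0`. -/

noncomputable section

open scoped InnerProductSpace

local notation "⟪" x ", " y "⟫" => @inner ℂ _ _ x y

theorem stmt0
    {H H1 : Type*} [NormedAddCommGroup H] [InnerProductSpace ℂ H] [CompleteSpace H]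
    [NormedAddCommGroup H1] [InnerProductSpace ℂ H1] [CompleteSpace H1]
    (J : H1 →L[ℂ] H) (hJinj : Function.Injective J) (hJdense : DenseRange J)
    (H0 : Submodule ℂ H1) [CompleteSpace H0]
    (hH0dense : DenseRange (fun v : H0 => J v))
    (TN : H →L[ℂ] H1) (hTN : ∀ (u : H) (v : H1), ⟪TN u, v⟫ = ⟪u, J v⟫)
    (TD : H →L[ℂ] H1) (hTDmem : ∀ u : H, TD u ∈ H0)
    (hTD : ∀ (u : H), ∀ v ∈ H0, ⟪TD u, (v : H1)⟫ = ⟪u, J v⟫) :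
    (∀ (u : H), ∀ v ∈ H0, ⟪TD u, (v : H1)⟫ = ⟪u, J v⟫ ∧ ⟪TN u, (v : H1)⟫ = ⟪u, J v⟫)
      ∧ ∀ u : H, TD u = (H0.orthogonalProjectionOnto (TN u) : H1) := by
  refine ⟨fun u v hv => ⟨hTD u v hv, hTN u v⟩, fun u => ?_⟩
  exact (Submodule.eq_starProjection_of_mem_of_inner_eq_zero (hTDmem u)
    (fun w hw => by rw [inner_sub_left, hTN u w, hTD u w hw, sub_self])).symm

end
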